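/- For a nonnegative integer τ and real α, the finite sum identity holds: 1 = ∑_{n=0}^{τ} ((−1)ⁿ/(n!)²) ((τ+n)!/(τ−n)!) tanh^{2n}(α/2) ₂F₁(−τ, 1+τ; 1+n; −sinh²(α/2)). -/

import Mathlib

/-- The Gauss hypergeometric series `₂F₁(a, b; c; x)`. -/
noncomputable def hyp2F1 (a b c x : ℝ) : ℝ :=
  ∑' n : ℕ, ((ascPochhammer ℝ n).eval a * (ascPochhammer ℝ n).eval b
      / ((ascPochhammer ℝ n).eval c * n.factorial)) * x ^ n

open Finset

/-- Chu–Vandermonde in range form. -/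
lemma vand_range (a b k : ℕ) :
    ∑ j ∈ range (k + 1), a.choose j * b.choose (k - j) = (a + b).choose k := by
  rw [Nat.add_choose_eq, Finset.Nat.sum_antidiagonal_eq_sum_range_succ_mk]

/-- Square-to-triangle resummation for functions vanishing outside the square. -/
lemma sum_sq_tri (N : ℕ) (f : ℕ → ℕ → ℝ) (hf : ∀ j m, N ≤ j ∨ N ≤ m → f j m = 0) :
    ∑ j ∈ range N, ∑ m ∈ range N, f j m
      = ∑ k ∈ range (2 * N), ∑ j ∈ range (k + 1), f j (k - j) := by
  rw [← Finset.sum_product']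
  rw [Finset.sum_sigma']
  have h1 : ∑ p ∈ range N ×ˢ range N, f p.1 p.2
      = ∑ p ∈ (range (2 * N) ×ˢ range (2 * N)).filter (fun p => p.1 + p.2 < 2 * N),
          f p.1 p.2 := by
    apply Finset.sum_subset
    · intro p hp
      simp only [Finset.mem_product, Finset.mem_range, Finset.mem_filter] at hp ⊢
      omega
    · intro p hp hp2
      simp only [Finset.mem_product, Finset.mem_range, Finset.mem_filter] at hp hp2
      apply hf
      omega
  rw [h1]
  refine Finset.sum_nbij' (fun p => ⟨p.1 + p.2, p.1⟩) (fun q => (q.2, q.1 - q.2)) ?_ ?_ ?_ ?_ ?_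
  · intro p hp
    simp only [Finset.mem_filter, Finset.mem_product, Finset.mem_range] at hp
    simp only [Finset.mem_sigma, Finset.mem_range]
    omega
  · intro q hq
    simp only [Finset.mem_sigma, Finset.mem_range] at hq
    simp only [Finset.mem_filter, Finset.mem_product, Finset.mem_range]
    omega
  · intro p _; simp
  · intro q hq
    simp only [Finset.mem_sigma, Finset.mem_range] at hq
    ext <;> simp <;> omega
  · intro p _; simp

lemma Wid (k : ℕ) : ∀ x : ℕ,
    ∑ n ∈ range (k + 1), (-1 : ℝ) ^ n * ((k.choose n : ℝ) * ((x + n).choose k : ℝ))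
      = (-1) ^ k := by
  induction k with
  | zero => intro x; simp
  | succ k ih =>
    intro x
    set a : ℕ → ℝ := fun n => (-1 : ℝ) ^ n * ((k.choose n : ℝ) * ((x + 1 + n).choose (k+1) : ℝ)) with ha
    set b : ℕ → ℝ := fun n => (-1 : ℝ) ^ n * ((k.choose (n+1) : ℝ) * ((x + (n+1)).choose (k+1) : ℝ)) with hb
    set g : ℕ → ℝ := fun m => (-1 : ℝ) ^ m * ((k.choose m : ℝ) * ((x + m).choose (k+1) : ℝ)) with hg
    have hA1 : ∑ m ∈ range (k + 2), g m = ∑ m ∈ range (k + 1), g m := by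
      rw [Finset.sum_range_succ]
      simp [hg, Nat.choose_succ_self]
    have hB : ∑ m ∈ range (k + 2), g m = -(∑ n ∈ range (k+1), b n) + g 0 := by
      rw [Finset.sum_range_succ' g (k+1), ← Finset.sum_neg_distrib]
      congr 1
      apply Finset.sum_congr rfl
      intro n _
      simp only [hg, hb]
      ring
    have hsplit : ∑ n ∈ range (k + 2), (-1 : ℝ) ^ n * (((k+1).choose n : ℝ) * ((x + n).choose (k+1) : ℝ))
        = ∑ n ∈ range (k + 1), (-a n - b n) + g 0 := by
      rw [Finset.sum_range_succ' (fun n => (-1 : ℝ) ^ n * (((k+1).choose n : ℝ) * ((x + n).choose (k+1) : ℝ))) (k+1)]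
      simp only [hg, Nat.choose_zero_right]
      congr 1
      · apply Finset.sum_congr rfl
        intro n _
        have hp : ((k+1).choose (n+1) : ℝ) = (k.choose n : ℝ) + (k.choose (n+1) : ℝ) := by
          rw [Nat.choose_succ_succ]; push_cast; ring
        have hx : x + 1 + n = x + (n + 1) := by omega
        simp only [ha, hb, hp, hx]
        ring

    rw [hsplit, Finset.sum_sub_distrib]
    have hBval : ∑ n ∈ range (k+1), b n = g 0 - ∑ m ∈ range (k+1), g m := by
      have := hB.symm.trans hA1
      linarith
    rw [hBval]
    have hAA : ∑ m ∈ range (k + 1), g m - ∑ n ∈ range (k+1), a n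
        = -(∑ n ∈ range (k+1), (-1 : ℝ) ^ n * ((k.choose n : ℝ) * ((x + n).choose k : ℝ))) := by
      rw [← Finset.sum_sub_distrib, ← Finset.sum_neg_distrib]
      apply Finset.sum_congr rfl
      intro n _
      simp only [hg, ha]
      have hp : ((x + 1 + n).choose (k+1) : ℝ) = ((x+n).choose k : ℝ) + ((x+n).choose (k+1) : ℝ) := by
        have hx : x + 1 + n = (x + n) + 1 := by omega
        rw [hx, Nat.choose_succ_succ]; push_cast; ring
      rw [hp]
      ring
    have : ∑ n ∈ range (k+1), (-a n) - (g 0 - ∑ m ∈ range (k+1), g m) + g 0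
        = (∑ m ∈ range (k + 1), g m - ∑ n ∈ range (k+1), a n) := by
      rw [Finset.sum_neg_distrib]; ring
    rw [this, hAA, ih x]
    ring

lemma poch_nat (N j : ℕ) :
    (ascPochhammer ℝ j).eval ((N : ℝ) + 1) = ((N + j).factorial : ℝ) / (N.factorial : ℝ) := by
  have h1 : ((N : ℝ) + 1) = ((N + 1 : ℕ) : ℝ) := by push_cast; ring
  rw [h1, ← ascPochhammer_eval_cast, ascPochhammer_nat_eq_ascFactorial]
  rw [eq_div_iff (by exact_mod_cast N.factorial_ne_zero)]
  rw [← Nat.cast_mul, mul_comm, Nat.factorial_mul_ascFactorial]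

lemma poch_neg {τ j : ℕ} (h : j ≤ τ) :
    (ascPochhammer ℝ j).eval (-(τ : ℝ))
      = (-1) ^ j * (τ.factorial : ℝ) / ((τ - j).factorial : ℝ) := by
  rw [ascPochhammer_eval_neg_eq_descPochhammer, descPochhammer_eval_eq_descFactorial]
  rw [mul_div_assoc]
  congr 1
  rw [eq_div_iff (by exact_mod_cast (τ - j).factorial_ne_zero)]
  rw [← Nat.cast_mul, mul_comm, Nat.factorial_mul_descFactorial h]

lemma poch_zero {τ j : ℕ} (h : τ < j) :
    (ascPochhammer ℝ j).eval (-(τ : ℝ)) = 0 :=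
  ascPochhammer_eval_neg_coe_nat_of_lt h

noncomputable def Ef (τ n j : ℕ) : ℝ :=
  ((τ+j).factorial : ℝ) * (n.factorial : ℝ)
    / (((τ-j).factorial : ℝ) * ((n+j).factorial : ℝ) * (j.factorial : ℝ))

noncomputable def Ff (τ n j : ℕ) : ℝ :=
  if n + j ≤ τ then
    (τ.factorial : ℝ) * ((τ-n).factorial : ℝ) * (n.factorial : ℝ)
      / (((τ-j).factorial : ℝ) * ((τ-n-j).factorial : ℝ) * ((n+j).factorial : ℝ) * (j.factorial : ℝ))
  else 0

noncomputable def ccf (τ n : ℕ) : ℝ :=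
  ((τ+n).factorial : ℝ) / (((τ-n).factorial : ℝ) * ((n.factorial : ℝ))^2)

lemma fact_ne (m : ℕ) : (m.factorial : ℝ) ≠ 0 := by
  exact_mod_cast m.factorial_ne_zero


lemma Vterm (τ n k j : ℕ) (hn : n ≤ τ) (hk : k ≤ τ) (hj : j ≤ k) :
    Ff τ n j * (((τ-j).choose (k-j) : ℝ))
      = Ef τ n k * (((τ-n).choose j : ℝ) * (((n+k).choose (k-j) : ℝ)))
          / (((τ+k).choose k : ℝ)) := by
  by_cases hnj : n + j ≤ τ
  · rw [Ff, if_pos hnj, Ef]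
    rw [Nat.cast_choose ℝ (show k - j ≤ τ - j by omega),
        Nat.cast_choose ℝ (show j ≤ τ - n by omega),
        Nat.cast_choose ℝ (show k - j ≤ n + k by omega),
        Nat.cast_choose ℝ (show k ≤ τ + k by omega)]
    rw [show (τ - j) - (k - j) = τ - k by omega,
        show (τ - n) - j = τ - n - j by omega,
        show (n + k) - (k - j) = n + j by omega,
        show (τ + k) - k = τ by omega]
    field_simp
  · rw [Ff, if_neg hnj, Nat.choose_eq_zero_of_lt (show τ - n < j by omega)]
    simp

lemma SumV (τ n k : ℕ) (hn : n ≤ τ) (hk : k ≤ τ) :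
    ∑ j ∈ range (k+1), Ff τ n j * (((τ-j).choose (k-j) : ℝ)) = Ef τ n k := by
  have h1 : ∀ j ∈ range (k+1), Ff τ n j * (((τ-j).choose (k-j) : ℝ))
      = Ef τ n k * (((τ-n).choose j : ℝ) * (((n+k).choose (k-j) : ℝ)))
          / (((τ+k).choose k : ℝ)) := by
    intro j hj
    exact Vterm τ n k j hn hk (by simpa using Nat.lt_succ_iff.mp (Finset.mem_range.mp hj))
  rw [Finset.sum_congr rfl h1, ← Finset.sum_div, ← Finset.mul_sum]
  have hv : ∑ j ∈ range (k+1), (((τ-n).choose j : ℝ) * (((n+k).choose (k-j) : ℝ)))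
      = (((τ+k).choose k : ℝ)) := by
    rw [show τ + k = (τ - n) + (n + k) by omega]
    exact_mod_cast congrArg (Nat.cast : ℕ → ℝ) (vand_range (τ-n) (n+k) k)
  rw [hv, mul_div_assoc, div_self (by exact_mod_cast Nat.choose_pos (show k ≤ τ + k by omega) |>.ne'), mul_one]


lemma Ff_zero {τ n j : ℕ} (h : τ < n + j) : Ff τ n j = 0 := by
  rw [Ff, if_neg (by omega)]

lemma Pstep (τ n : ℕ) (hn : n ≤ τ) (s c y : ℝ) (hc : c = 1 + s) (hy : y * c = s) :
    ∑ j ∈ range (τ+1), Ef τ n j * s ^ j = c ^ τ * ∑ j ∈ range (τ+1), Ff τ n j * y ^ j := by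
  have step1 : c ^ τ * ∑ j ∈ range (τ+1), Ff τ n j * y ^ j
      = ∑ j ∈ range (τ+1), ∑ m ∈ range (τ+1),
          Ff τ n j * (((τ-j).choose m : ℝ)) * s ^ (j + m) := by
    rw [Finset.mul_sum]
    apply Finset.sum_congr rfl
    intro j hj
    have hjτ : j ≤ τ := Nat.lt_succ_iff.mp (Finset.mem_range.mp hj)
    have hcp : c ^ τ = c ^ j * c ^ (τ - j) := by
      rw [← pow_add]; congr 1; omega
    have hbin : c ^ (τ - j) = ∑ m ∈ range (τ+1), (((τ-j).choose m : ℝ)) * s ^ m := by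
      rw [hc, add_comm, add_pow]
      rw [Finset.sum_subset (Finset.range_subset_range.mpr (show τ - j + 1 ≤ τ + 1 by omega))]
      · apply Finset.sum_congr rfl
        intro m _
        rw [one_pow, mul_one, mul_comm]
      · intro m hm1 hm2
        simp only [Finset.mem_range] at hm1 hm2
        rw [Nat.choose_eq_zero_of_lt (by omega)]
        simp
    calc c ^ τ * (Ff τ n j * y ^ j)
        = c ^ (τ - j) * (c ^ j * (Ff τ n j * y ^ j)) := by rw [hcp]; ring
      _ = ∑ m ∈ range (τ+1), ((((τ-j).choose m : ℝ)) * s ^ m) * (c ^ j * (Ff τ n j * y ^ j)) := by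
          rw [hbin, Finset.sum_mul]
      _ = ∑ m ∈ range (τ+1), Ff τ n j * (((τ-j).choose m : ℝ)) * s ^ (j + m) := by
          apply Finset.sum_congr rfl
          intro m _
          have hsj : y ^ j * c ^ j = s ^ j := by rw [← mul_pow, hy]
          calc ((((τ-j).choose m : ℝ)) * s ^ m) * (c ^ j * (Ff τ n j * y ^ j))
              = Ff τ n j * (((τ-j).choose m : ℝ)) * ((y ^ j * c ^ j) * s ^ m) := by ring
            _ = Ff τ n j * (((τ-j).choose m : ℝ)) * (s ^ j * s ^ m) := by rw [hsj]
            _ = Ff τ n j * (((τ-j).choose m : ℝ)) * s ^ (j + m) := by rw [pow_add]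
  rw [step1]
  rw [sum_sq_tri (τ+1) (fun j m => Ff τ n j * (((τ-j).choose m : ℝ)) * s ^ (j + m)) ?hzero]
  case hzero =>
    intro j m h
    rcases h with h | h
    · rw [Ff_zero (by omega)]; ring
    · rw [Nat.choose_eq_zero_of_lt (by omega), Nat.cast_zero]; ring
  have inner : ∀ k ∈ range (2 * (τ+1)),
      (∑ j ∈ range (k+1), Ff τ n j * (((τ-j).choose (k-j) : ℝ)) * s ^ (j + (k - j)))
        = if k ≤ τ then Ef τ n k * s ^ k else 0 := by
    intro k _
    have hexp : ∀ j ∈ range (k+1),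
        Ff τ n j * (((τ-j).choose (k-j) : ℝ)) * s ^ (j + (k - j))
          = Ff τ n j * (((τ-j).choose (k-j) : ℝ)) * s ^ k := by
      intro j hj
      have : j + (k - j) = k := by
        have := Nat.lt_succ_iff.mp (Finset.mem_range.mp hj); omega
      rw [this]
    rw [Finset.sum_congr rfl hexp]
    by_cases hk : k ≤ τ
    · rw [if_pos hk, ← Finset.sum_mul, SumV τ n k hn hk]
    · rw [if_neg hk]
      apply Finset.sum_eq_zero
      intro j hj
      have hjk : j ≤ k := Nat.lt_succ_iff.mp (Finset.mem_range.mp hj)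
      by_cases hnj : n + j ≤ τ
      · rw [Nat.choose_eq_zero_of_lt (show τ - j < k - j by omega), Nat.cast_zero]
        ring
      · rw [Ff_zero (by omega)]; ring
  rw [Finset.sum_congr rfl inner]
  rw [← Finset.sum_subset (Finset.range_subset_range.mpr (show τ + 1 ≤ 2 * (τ+1) by omega))]
  · apply Finset.sum_congr rfl
    intro k hk
    rw [if_pos (Nat.lt_succ_iff.mp (Finset.mem_range.mp hk))]
  · intro k _ hk2
    rw [if_neg (by simp only [Finset.mem_range] at hk2; omega)]

lemma Wterm (τ n k : ℕ) (hn : n ≤ k) (hk : k ≤ τ) :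
    ccf τ n * Ff τ n (k-n)
      = (k.choose n : ℝ) * ((τ+n).choose k : ℝ)
          * ((τ.factorial : ℝ) / ((k.factorial : ℝ) * ((τ-k).factorial : ℝ))) := by
  rw [ccf, Ff, if_pos (by omega)]
  rw [Nat.cast_choose ℝ hn, Nat.cast_choose ℝ (show k ≤ τ + n by omega)]
  rw [show τ - n - (k - n) = τ - k by omega, show n + (k - n) = k by omega,
      show (τ + n) - k = τ + n - k by omega, show τ - (k - n) = τ + n - k by omega]
  field_simp

lemma master (τ : ℕ) (s c y : ℝ) (hc : c = 1 + s) (hy : y * c = s) :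
    (1:ℝ) = ∑ n ∈ range (τ+1), ∑ j ∈ range (τ+1),
      (-1)^n * ccf τ n * Ef τ n j * y^n * s^j := by
  have h1c : c * (1 - y) = 1 := by
    rw [mul_sub, mul_one, mul_comm c y, hy, hc]; ring
  have row : ∀ n ∈ range (τ+1),
      ∑ j ∈ range (τ+1), (-1)^n * ccf τ n * Ef τ n j * y^n * s^j
        = c^τ * ∑ j ∈ range (τ+1), ((-1)^n * ccf τ n * Ff τ n j * y^(n+j)) := by
    intro n hn
    have hnτ : n ≤ τ := Nat.lt_succ_iff.mp (Finset.mem_range.mp hn)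
    have hP := Pstep τ n hnτ s c y hc hy
    calc ∑ j ∈ range (τ+1), (-1)^n * ccf τ n * Ef τ n j * y^n * s^j
        = ((-1)^n * ccf τ n * y^n) * ∑ j ∈ range (τ+1), Ef τ n j * s^j := by
          rw [Finset.mul_sum]
          exact Finset.sum_congr rfl (fun j _ => by ring)
      _ = ((-1)^n * ccf τ n * y^n) * (c^τ * ∑ j ∈ range (τ+1), Ff τ n j * y^j) := by rw [hP]
      _ = c^τ * ∑ j ∈ range (τ+1), ((-1)^n * ccf τ n * Ff τ n j * y^(n+j)) := by
          simp only [Finset.mul_sum]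
          apply Finset.sum_congr rfl
          intro j _
          rw [pow_add]; ring
  rw [Finset.sum_congr rfl row, ← Finset.mul_sum]
  rw [sum_sq_tri (τ+1) (fun n j => (-1)^n * ccf τ n * Ff τ n j * y^(n+j)) ?hzero]
  case hzero =>
    intro n j h
    rw [Ff_zero (by omega)]
    ring
  have inner : ∀ k ∈ range (2 * (τ+1)),
      (∑ n ∈ range (k+1), (-1)^n * ccf τ n * Ff τ n (k-n) * y^(n+(k-n)))
        = (τ.choose k : ℝ) * (-y)^k := by
    intro k _
    by_cases hk : k ≤ τ
    · have hterm : ∀ n ∈ range (k+1),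
          (-1)^n * ccf τ n * Ff τ n (k-n) * y^(n+(k-n))
            = ((-1 : ℝ)^n * ((k.choose n : ℝ) * ((τ+n).choose k : ℝ)))
                * (((τ.factorial : ℝ) / ((k.factorial : ℝ) * ((τ-k).factorial : ℝ))) * y^k) := by
        intro n hn
        have hnk : n ≤ k := Nat.lt_succ_iff.mp (Finset.mem_range.mp hn)
        rw [show n + (k - n) = k by omega]
        rw [mul_assoc ((-1:ℝ)^n) (ccf τ n) (Ff τ n (k-n)), Wterm τ n k hnk hk]
        ring
      rw [Finset.sum_congr rfl hterm, ← Finset.sum_mul, Wid k τ]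
      rw [Nat.cast_choose ℝ hk, neg_pow]
      ring
    · rw [Nat.choose_eq_zero_of_lt (by omega), Nat.cast_zero, zero_mul]
      apply Finset.sum_eq_zero
      intro n hn
      have hnk : n ≤ k := Nat.lt_succ_iff.mp (Finset.mem_range.mp hn)
      rw [Ff_zero (show τ < n + (k - n) by omega)]
      ring
  rw [Finset.sum_congr rfl inner]
  rw [← Finset.sum_subset (Finset.range_subset_range.mpr (show τ + 1 ≤ 2 * (τ+1) by omega))
      (fun k _ hk2 => by
        rw [Nat.choose_eq_zero_of_lt (by simp only [Finset.mem_range] at hk2; omega),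
          Nat.cast_zero, zero_mul])]
  have hbin : ∑ k ∈ range (τ+1), (τ.choose k : ℝ) * (-y)^k = (1 - y)^τ := by
    rw [show (1 : ℝ) - y = (-y) + 1 by ring, add_pow]
    exact Finset.sum_congr rfl (fun k _ => by rw [one_pow, mul_one]; ring)
  rw [hbin, ← mul_pow, h1c, one_pow]

lemma hyp_eq (τ n : ℕ) (x : ℝ) :
    hyp2F1 (-(τ : ℝ)) (1 + τ) (1 + n) x
      = ∑ j ∈ range (τ+1),
          ((ascPochhammer ℝ j).eval (-(τ : ℝ)) * (ascPochhammer ℝ j).eval ((1 : ℝ) + τ)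
            / ((ascPochhammer ℝ j).eval ((1 : ℝ) + n) * j.factorial)) * x ^ j := by
  apply tsum_eq_sum
  intro j hj
  have hjτ : τ < j := by simp only [Finset.mem_range] at hj; omega
  rw [ascPochhammer_eval_neg_coe_nat_of_lt hjτ]
  simp

/-- the finite sum identity
`1 = ∑_{n=0}^{τ} ((−1)ⁿ/(n!)²)((τ+n)!/(τ−n)!) tanh^{2n}(α/2)
  ₂F₁(−τ, 1+τ; 1+n; −sinh²(α/2))`. -/
theorem finite_sum_identity (τ : ℕ) (α : ℝ) :
    (1 : ℝ) = ∑ n ∈ Finset.range (τ + 1),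
      ((-1 : ℝ) ^ n / (n.factorial : ℝ) ^ 2)
        * ((τ + n).factorial : ℝ) / ((τ - n).factorial : ℝ)
        * Real.tanh (α / 2) ^ (2 * n)
        * hyp2F1 (-(τ : ℝ)) (1 + τ) (1 + n) (-(Real.sinh (α / 2)) ^ 2) := by
  set x := α / 2 with hx
  set s : ℝ := Real.sinh x ^ 2 with hs
  set c : ℝ := Real.cosh x ^ 2 with hcdef
  set y : ℝ := Real.tanh x ^ 2 with hydef
  have hc : c = 1 + s := by rw [hcdef, hs, Real.cosh_sq]; ring
  have hcosh : Real.cosh x ≠ 0 := (Real.cosh_pos x).ne'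
  have hy : y * c = s := by
    rw [hydef, hcdef, hs, Real.tanh_eq_sinh_div_cosh, div_pow,
      div_mul_cancel₀ _ (pow_ne_zero 2 hcosh)]
  refine (master τ s c y hc hy).trans ?_
  apply Finset.sum_congr rfl
  intro n hn
  have hnτ : n ≤ τ := Nat.lt_succ_iff.mp (Finset.mem_range.mp hn)
  rw [hyp_eq τ n (-(Real.sinh x) ^ 2)]
  rw [Finset.mul_sum]
  apply Finset.sum_congr rfl
  intro j hj
  have hjτ : j ≤ τ := Nat.lt_succ_iff.mp (Finset.mem_range.mp hj)
  have h1τ : (1 : ℝ) + τ = (τ : ℝ) + 1 := by ring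
  have h1n : (1 : ℝ) + n = (n : ℝ) + 1 := by ring
  rw [h1τ, h1n, poch_nat τ j, poch_nat n j, poch_neg hjτ]
  have hxj : (-(Real.sinh x) ^ 2) ^ j = (-1 : ℝ) ^ j * s ^ j := by
    rw [hs, ← neg_pow]
  rw [hxj]
  have h11 : ((-1 : ℝ)) ^ j * ((-1) : ℝ) ^ j = 1 := by
    rw [← pow_add, ← two_mul, pow_mul, neg_one_sq, one_pow]
  have hyn : Real.tanh x ^ (2 * n) = y ^ n := by rw [hydef, pow_mul]
  rw [hyn]
  rw [Ef, ccf]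
  field_simp
  all_goals ring_nf
  all_goals try (rw [show ((-1:ℝ))^(j*2) = 1 by
    rw [mul_comm j 2, pow_mul, neg_one_sq, one_pow]]; ring)
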